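/- arXiv:1810.02751 — 2 statements merged into one kernel-verified Lean document; each statement's English description precedes it below -/
import Mathlib

section
/- Under the domination condition ‖Df(x)v‖·‖Df(x)^{-1}w‖ ≤ λ‖v‖·‖w‖ for v ∈ E^s_x, w ∈ Df(x)C(x), if F_1 and F_2 are d-dimensional subspaces of T_xM contained in the cone C(x) and F_2 is the graph over F_1 of a linear map L_{F_2} : F_1 → E^s_x, then for every i ≥ 1 the distance between the iterated subspaces satisfies θ_{f^i(x)}(Df^i(x)F_1, Df^i(x)F_2) ≤ λ^i · θ_x(F_1, F_2), where θ_x(F_1,F_2) := max{‖L_{F_1}‖, ‖L_{F_2}‖}. -/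
variable {E : Type*} [NormedAddCommGroup E] [NormedSpace ℝ E]

/-- `cocycle A n` represents `Df^n(x) = A (n-1) ∘ ⋯ ∘ A 0`, where `A i = Df(f^i x)`. -/
noncomputable def cocycle (A : ℕ → E →L[ℝ] E) : ℕ → E →L[ℝ] E
  | 0 => ContinuousLinearMap.id ℝ E
  | n + 1 => A n ∘L cocycle A n

/-- Under the domination condition (H4), if `F₁, F₂` are `d`-dimensional subspaces
contained in the cone `C(x)` and `F₂` is the graph over `F₁` of a linear map
`L₂ 0 : F₁ → E^s_x` (and `F₁` the graph of `L₁ 0 : F₂ → E^s_x`), then for every `i ≥ 1`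
`θ_{f^i(x)}(Df^i(x)F₁, Df^i(x)F₂) ≤ λ^i · θ_x(F₁,F₂)`, where
`θ_x(F₁,F₂) = max{‖L_{F₁}‖, ‖L_{F₂}‖}` is expressed via the bound `θ` on both graph maps. -/
theorem iterated_graph_distance_contraction
    (A : ℕ → E →L[ℝ] E)        -- A i = Df(f^i x) along the orbit of x
    (Es : ℕ → Submodule ℝ E)   -- the stable bundle along the orbit
    (C : ℕ → Set E)            -- the cone field along the orbit
    (lam : ℝ) (hlam0 : 0 < lam) (hlam1 : lam < 1)
    -- (H1): invariance of the stable bundle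
    (hEs : ∀ i, Submodule.map (A i : E →ₗ[ℝ] E) (Es i) = Es (i + 1))
    -- positive invariance of the cone field
    (hC : ∀ i, A i '' C i ⊆ C (i + 1))
    -- (H4): domination, in the form `‖Df s‖·‖w‖ ≤ λ‖s‖·‖Df w‖` for `s ∈ E^s`, `w ∈ C`
    (hdom : ∀ i, ∀ s ∈ (Es i : Set E), ∀ w ∈ C i,
      ‖A i s‖ * ‖w‖ ≤ lam * (‖s‖ * ‖A i w‖))
    (d : ℕ) (F₁ F₂ : Submodule ℝ E)
    (hd₁ : Module.finrank ℝ F₁ = d) (hd₂ : Module.finrank ℝ F₂ = d)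
    (hF₁ : (F₁ : Set E) ⊆ C 0) (hF₂ : (F₂ : Set E) ⊆ C 0)
    -- the graph maps at each iterate: `L₂ i` realizes `Df^i F₂` as a graph over `Df^i F₁`
    (L₁ L₂ : ℕ → E →ₗ[ℝ] E)
    (hL₂range : ∀ i, ∀ v ∈ Submodule.map (cocycle A i : E →ₗ[ℝ] E) F₁, L₂ i v ∈ Es i)
    (hL₁range : ∀ i, ∀ v ∈ Submodule.map (cocycle A i : E →ₗ[ℝ] E) F₂, L₁ i v ∈ Es i)
    (hgraph₂ : ∀ i, (Submodule.map (cocycle A i : E →ₗ[ℝ] E) F₂ : Set E)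
      = (fun v => v + L₂ i v) '' (Submodule.map (cocycle A i : E →ₗ[ℝ] E) F₁ : Set E))
    (hgraph₁ : ∀ i, (Submodule.map (cocycle A i : E →ₗ[ℝ] E) F₁ : Set E)
      = (fun v => v + L₁ i v) '' (Submodule.map (cocycle A i : E →ₗ[ℝ] E) F₂ : Set E))
    -- invariance of the graph maps: `Df^i ∘ L = L^i ∘ Df^i`
    (hinv₂ : ∀ i, ∀ v ∈ F₁, cocycle A i (L₂ 0 v) = L₂ i (cocycle A i v))
    (hinv₁ : ∀ i, ∀ v ∈ F₂, cocycle A i (L₁ 0 v) = L₁ i (cocycle A i v))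
    -- θ bounds `θ_x(F₁,F₂) = max{‖L_{F₁}‖,‖L_{F₂}‖}`
    (θ : ℝ) (hθ : 0 ≤ θ)
    (hθ₂ : ∀ v ∈ F₁, ‖L₂ 0 v‖ ≤ θ * ‖v‖)
    (hθ₁ : ∀ v ∈ F₂, ‖L₁ 0 v‖ ≤ θ * ‖v‖)
    (i : ℕ) (hi : 1 ≤ i) :
    (∀ v ∈ Submodule.map (cocycle A i : E →ₗ[ℝ] E) F₁, ‖L₂ i v‖ ≤ lam ^ i * θ * ‖v‖) ∧
    (∀ v ∈ Submodule.map (cocycle A i : E →ₗ[ℝ] E) F₂, ‖L₁ i v‖ ≤ lam ^ i * θ * ‖v‖) := by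

  -- membership of iterates in the stable bundle and cone
  have hEsmem : ∀ j, ∀ s ∈ Es 0, cocycle A j s ∈ Es j := by
    intro j
    induction j with
    | zero => intro s hs; exact hs
    | succ n ih =>
      intro s hs
      have : cocycle A (n+1) s = A n (cocycle A n s) := rfl
      rw [this, ← hEs n]
      exact Submodule.mem_map.mpr ⟨_, ih s hs, rfl⟩
  have hCmem : ∀ j, ∀ w ∈ C 0, cocycle A j w ∈ C j := by
    intro j
    induction j with
    | zero => intro w hw; exact hw
    | succ n ih =>
      intro w hw
      have : cocycle A (n+1) w = A n (cocycle A n w) := rfl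
      rw [this]
      exact hC n ⟨_, ih w hw, rfl⟩
  -- key iterated domination estimate
  have key : ∀ j, ∀ s ∈ (Es 0 : Set E), ∀ w ∈ C 0,
      ‖cocycle A j s‖ * ‖w‖ ≤ lam ^ j * (‖s‖ * ‖cocycle A j w‖) := by
    intro j
    induction j with
    | zero => intro s _ w _; simp [cocycle]
    | succ n ih =>
      intro s hs w hw
      have ih' := ih s hs w hw
      have hcs : cocycle A n s ∈ Es n := hEsmem n s hs
      have hcw : cocycle A n w ∈ C n := hCmem n w hw
      have hdn := hdom n _ hcs _ hcw
      have e1 : cocycle A (n+1) s = A n (cocycle A n s) := rfl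
      have e2 : cocycle A (n+1) w = A n (cocycle A n w) := rfl
      rw [e1, e2]
      by_cases hzs : cocycle A n s = 0
      · simp [hzs]
        positivity
      by_cases hzw : cocycle A n w = 0
      · -- then ‖cs‖ * ‖w‖ ≤ 0, so cs = 0 or w = 0; cs ≠ 0 so w = 0
        rw [hzw] at ih'
        simp only [norm_zero, mul_zero] at ih'
        have : ‖w‖ = 0 := by
          have hcs0 : 0 < ‖cocycle A n s‖ := norm_pos_iff.mpr hzs
          nlinarith [norm_nonneg w]
        rw [this]
        simp
        positivity
      have hpos : 0 < ‖cocycle A n s‖ * ‖cocycle A n w‖ :=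
        mul_pos (norm_pos_iff.mpr hzs) (norm_pos_iff.mpr hzw)
      have hmul := mul_le_mul hdn ih' (by positivity) (by positivity)
      rw [pow_succ]
      nlinarith [norm_nonneg (A n (cocycle A n s)), norm_nonneg (A n (cocycle A n w)),
        norm_nonneg s, norm_nonneg w, norm_nonneg (cocycle A n s), norm_nonneg (cocycle A n w)]
  -- generic argument for one side
  have main : ∀ (F G : Submodule ℝ E) (L : ℕ → E →ₗ[ℝ] E),
      (F : Set E) ⊆ C 0 →
      (∀ v ∈ F, cocycle A i (L 0 v) = L i (cocycle A i v)) →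
      (∀ v ∈ F, ‖L 0 v‖ ≤ θ * ‖v‖) →
      (∀ v ∈ Submodule.map (cocycle A 0 : E →ₗ[ℝ] E) F, L 0 v ∈ Es 0) →
      ∀ v ∈ Submodule.map (cocycle A i : E →ₗ[ℝ] E) F, ‖L i v‖ ≤ lam ^ i * θ * ‖v‖ := by
    intro F G L hFC hinvL hθL hrange v hv
    obtain ⟨w, hw, rfl⟩ := Submodule.mem_map.mp hv
    have hwC : w ∈ C 0 := hFC hw
    have hs : L 0 w ∈ Es 0 := hrange w (Submodule.mem_map.mpr ⟨w, hw, rfl⟩)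
    have hk := key i (L 0 w) hs w hwC
    rw [hinvL w hw] at hk
    by_cases hw0 : w = 0
    · subst hw0
      simp
    have hwpos : 0 < ‖w‖ := norm_pos_iff.mpr hw0
    have hθw := hθL w hw
    have h2 : ‖L i (cocycle A i w)‖ * ‖w‖ ≤ lam ^ i * (θ * ‖w‖ * ‖cocycle A i w‖) := by
      calc ‖L i (cocycle A i w)‖ * ‖w‖ ≤ lam ^ i * (‖L 0 w‖ * ‖cocycle A i w‖) := hk
        _ ≤ lam ^ i * (θ * ‖w‖ * ‖cocycle A i w‖) := by
            apply mul_le_mul_of_nonneg_left _ (by positivity)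
            exact mul_le_mul_of_nonneg_right hθw (norm_nonneg _)
    have := (mul_le_mul_iff_of_pos_right hwpos).mp (by nlinarith [pow_nonneg hlam0.le i] :
      ‖L i (cocycle A i w)‖ * ‖w‖ ≤ (lam ^ i * θ * ‖cocycle A i w‖) * ‖w‖)
    simpa using this
  exact ⟨main F₁ F₂ L₂ hF₁ (hinv₂ i) hθ₂ (hL₂range 0), main F₂ F₁ L₁ hF₂ (hinv₁ i) hθ₁ (hL₁range 0)⟩
end

section
/- In the case d = 1: if F_1, F_2 ⊂ T_xM are one-dimensional subspaces contained in C(x), e_1 ∈ F_1 a unit vector, and F_2 is the graph of L_{F_2} : F_1 → E^s_x, then |det(Df^n(x)|_{F_2})| / |det(Df^n(x)|_{F_1})| ≤ (1 + θ_{f^n(x)}(Df^n F_1, Df^n F_2)) / (1 − θ_x(F_1,F_2)), provided θ_x(F_1,F_2) < 1. -/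
variable {E : Type*} [NormedAddCommGroup E] [NormedSpace ℝ E]

/-- Case `d = 1`: if `F₁, F₂` are one-dimensional subspaces contained in `C(x)`,
`e₁ ∈ F₁` is a unit vector and `F₂ = graph(L₂)` for `L₂ : F₁ → E^s_x`, then
`|det(Df^n(x)|_{F₂})| / |det(Df^n(x)|_{F₁})| ≤ (1 + θₙ)/(1 − θ₀)`
where `θ₀ = θ_x(F₁,F₂)` (assumed `< 1`) and `θₙ = θ_{f^n(x)}(Df^n F₁, Df^n F₂)`.
Here `|det(Df^n|_{F})| = ‖Df^n e‖` for a unit vector `e ∈ F`, so the left-hand side is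
`‖Df^n(e₁+L₂e₁)‖ / ‖e₁+L₂e₁‖` divided by `‖Df^n e₁‖`. -/
theorem one_dimensional_determinant_ratio
    (A : ℕ → E →L[ℝ] E)        -- A i = Df(f^i x)
    (Es : ℕ → Submodule ℝ E)   -- stable bundle along the orbit
    (C : ℕ → Set E)            -- cone field along the orbit
    (hC : ∀ i, A i '' C i ⊆ C (i + 1))
    (hEs : ∀ i, Submodule.map (A i : E →ₗ[ℝ] E) (Es i) = Es (i + 1))
    (F₁ F₂ : Submodule ℝ E)
    (hd₁ : Module.finrank ℝ F₁ = 1) (hd₂ : Module.finrank ℝ F₂ = 1)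
    (hF₁ : (F₁ : Set E) ⊆ C 0) (hF₂ : (F₂ : Set E) ⊆ C 0)
    (e₁ : E) (he₁ : e₁ ∈ F₁) (he₁norm : ‖e₁‖ = 1)
    (L₂ Ln : E →ₗ[ℝ] E) (n : ℕ)
    (hL₂Es : L₂ e₁ ∈ Es 0)
    -- F₂ is the graph of L₂ over F₁
    (hgraph : (F₂ : Set E) = (fun v => v + L₂ v) '' (F₁ : Set E))
    -- invariance: Df^n ∘ L₂ = Lₙ ∘ Df^n on F₁
    (hconj : cocycle A n (L₂ e₁) = Ln (cocycle A n e₁))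
    (θ₀ θn : ℝ) (hθ₀0 : 0 ≤ θ₀) (hθ₀1 : θ₀ < 1) (hθn0 : 0 ≤ θn)
    (hθ₀ : ∀ v ∈ F₁, ‖L₂ v‖ ≤ θ₀ * ‖v‖)
    (hθn : ‖Ln (cocycle A n e₁)‖ ≤ θn * ‖cocycle A n e₁‖) :
    ‖cocycle A n (e₁ + L₂ e₁)‖ / ‖e₁ + L₂ e₁‖
      ≤ (1 + θn) / (1 - θ₀) * ‖cocycle A n e₁‖ := by
  have h1 : ‖cocycle A n (e₁ + L₂ e₁)‖ ≤ (1 + θn) * ‖cocycle A n e₁‖ := by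
    calc ‖cocycle A n (e₁ + L₂ e₁)‖ ≤ ‖cocycle A n e₁‖ + ‖cocycle A n (L₂ e₁)‖ := by
          rw [map_add]; exact norm_add_le _ _
      _ ≤ ‖cocycle A n e₁‖ + θn * ‖cocycle A n e₁‖ := by rw [hconj]; linarith
      _ = (1 + θn) * ‖cocycle A n e₁‖ := by ring
  have h2 : 1 - θ₀ ≤ ‖e₁ + L₂ e₁‖ := by
    have := norm_sub_norm_le e₁ (-(L₂ e₁))
    have hle := hθ₀ e₁ he₁
    rw [he₁norm] at hle
    simp only [sub_neg_eq_add, norm_neg] at this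
    linarith
  have h3 : (0:ℝ) < 1 - θ₀ := by linarith
  have h4 : (0:ℝ) < ‖e₁ + L₂ e₁‖ := lt_of_lt_of_le h3 h2
  rw [div_le_iff₀ h4]
  calc ‖cocycle A n (e₁ + L₂ e₁)‖ ≤ (1 + θn) * ‖cocycle A n e₁‖ := h1
    _ = (1 + θn) / (1 - θ₀) * ‖cocycle A n e₁‖ * (1 - θ₀) := by
        field_simp
    _ ≤ (1 + θn) / (1 - θ₀) * ‖cocycle A n e₁‖ * ‖e₁ + L₂ e₁‖ := by
        apply mul_le_mul_of_nonneg_left h2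
        positivity
end
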